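/- Let Λ = UV* + W where W is a dual certificate (P_T W = 0, ‖W‖ < 1/2, ‖P_Ω(UV* − λ·sgn(S₀) + W)‖_F ≤ λ/4, ‖P_{Ω⊥}(UV* + W)‖_∞ < λ/2), and write λ·P_Ω D = P_Ω(UV* − λ·sgn(S₀) + W), so ‖P_Ω D‖_F ≤ 1/4. Let Z_L = UV* + W' with P_T W' = 0 and ‖W'‖ ≤ 1, and Z_S = λ(sgn(S₀) + F) with P_Ω F = 0 and ‖F‖_∞ ≤ 1 (i.e., Z_L ∈ ∂‖L₀‖_* and Z_S ∈ ∂(λ‖S₀‖_1)). Then for any pair H = (H_L, H_S) with H_L + H_S = 0: ⟨Z_L, H_L⟩ + ⟨Z_S, H_S⟩ ≥ ⟨Z_L − Λ, P_{T⊥}(H_L)⟩ + ⟨Z_S − Λ, P_{Ω⊥}(H_S)⟩ − (λ/4)·‖P_Ω(H_S)‖_F. -/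

import Mathlib

open Matrix BigOperators

noncomputable def frobNorm {m k : ℕ} (A : Matrix (Fin m) (Fin k) ℝ) : ℝ :=
  Real.sqrt (∑ i, ∑ j, (A i j) ^ 2)

theorem Matrix.isHermitian_transpose_mul_self {m k : ℕ} (A : Matrix (Fin m) (Fin k) ℝ) :
    (Aᵀ * A).IsHermitian := by
  rw [IsHermitian, conjTranspose_eq_transpose_of_trivial, transpose_mul, transpose_transpose]

noncomputable def nuclearNorm {m k : ℕ} (A : Matrix (Fin m) (Fin k) ℝ) : ℝ :=
  ∑ i, Real.sqrt ((Matrix.isHermitian_transpose_mul_self A).eigenvalues i)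

def l1Norm {m k : ℕ} (A : Matrix (Fin m) (Fin k) ℝ) : ℝ :=
  ∑ i, ∑ j, |A i j|

noncomputable def linfNorm {m k : ℕ} (A : Matrix (Fin m) (Fin k) ℝ) : ℝ :=
  ⨆ i, ⨆ j, |A i j|

noncomputable def specNorm {m k : ℕ} (A : Matrix (Fin m) (Fin k) ℝ) : ℝ :=
  ‖LinearMap.toContinuousLinearMap (Matrix.toEuclideanLin A)‖

def finner {m k : ℕ} (A B : Matrix (Fin m) (Fin k) ℝ) : ℝ :=
  ∑ i, ∑ j, A i j * B i j

noncomputable def projSet {n : ℕ} (Ω : Set (Fin n × Fin n)) (S : Matrix (Fin n) (Fin n) ℝ) :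
    Matrix (Fin n) (Fin n) ℝ :=
  fun i j => Ω.indicator (fun p => S p.1 p.2) (i, j)

def suppSet {n : ℕ} (S : Matrix (Fin n) (Fin n) ℝ) : Set (Fin n × Fin n) :=
  {p | S p.1 p.2 ≠ 0}

noncomputable def sgnMat {n : ℕ} (S : Matrix (Fin n) (Fin n) ℝ) : Matrix (Fin n) (Fin n) ℝ :=
  fun i j => Real.sign (S i j)

def Tspace {n r : ℕ} (U V : Matrix (Fin n) (Fin r) ℝ) : Set (Matrix (Fin n) (Fin n) ℝ) :=
  {X | ∃ Q R : Matrix (Fin n) (Fin r) ℝ, X = U * Qᵀ + R * Vᵀ}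

def IsOrthProjOnto {n : ℕ} (P : Matrix (Fin n) (Fin n) ℝ →ₗ[ℝ] Matrix (Fin n) (Fin n) ℝ)
    (T : Set (Matrix (Fin n) (Fin n) ℝ)) : Prop :=
  (∀ X, P X ∈ T) ∧ (∀ X ∈ T, P X = X) ∧ (∀ X Y, Y ∈ T → finner (X - P X) Y = 0)

noncomputable def pairFrob {n : ℕ} (X : Matrix (Fin n) (Fin n) ℝ × Matrix (Fin n) (Fin n) ℝ) : ℝ :=
  Real.sqrt (frobNorm X.1 ^ 2 + frobNorm X.2 ^ 2)

noncomputable def projGamma {n : ℕ} (X : Matrix (Fin n) (Fin n) ℝ × Matrix (Fin n) (Fin n) ℝ) :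
    Matrix (Fin n) (Fin n) ℝ × Matrix (Fin n) (Fin n) ℝ :=
  ((1/2 : ℝ) • (X.1 + X.2), (1/2 : ℝ) • (X.1 + X.2))

open scoped Classical

noncomputable def suppFinset {n : ℕ} (S : Matrix (Fin n) (Fin n) ℝ) : Finset (Fin n × Fin n) :=
  Finset.univ.filter (fun p => S p.1 p.2 ≠ 0)


section Aux

variable {m k nn : ℕ}

lemma finner_add_left (A B C : Matrix (Fin m) (Fin k) ℝ) :
    finner (A + B) C = finner A C + finner B C := by
  simp [finner, Matrix.add_apply, add_mul, Finset.sum_add_distrib]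

lemma finner_add_right (A B C : Matrix (Fin m) (Fin k) ℝ) :
    finner A (B + C) = finner A B + finner A C := by
  simp [finner, Matrix.add_apply, mul_add, Finset.sum_add_distrib]

lemma finner_sub_right (A B C : Matrix (Fin m) (Fin k) ℝ) :
    finner A (B - C) = finner A B - finner A C := by
  simp [finner, Matrix.sub_apply, mul_sub, Finset.sum_sub_distrib]

lemma finner_smul_left (c : ℝ) (A B : Matrix (Fin m) (Fin k) ℝ) :
    finner (c • A) B = c * finner A B := by
  simp [finner, Matrix.smul_apply, smul_eq_mul, Finset.mul_sum, mul_assoc]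

lemma finner_neg_left (A B : Matrix (Fin m) (Fin k) ℝ) :
    finner (-A) B = - finner A B := by
  simp [finner, Matrix.neg_apply, Finset.sum_neg_distrib]

lemma finner_zero_right (A : Matrix (Fin m) (Fin k) ℝ) :
    finner A 0 = 0 := by simp [finner]

lemma frobNorm_nonneg (A : Matrix (Fin m) (Fin k) ℝ) : 0 ≤ frobNorm A :=
  Real.sqrt_nonneg _

lemma finner_le_frob (A B : Matrix (Fin m) (Fin k) ℝ) :
    finner A B ≤ frobNorm A * frobNorm B := by
  have h1 : finner A B = ∑ p : Fin m × Fin k, A p.1 p.2 * B p.1 p.2 := by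
    rw [Fintype.sum_prod_type]; rfl
  have h2 : frobNorm A = Real.sqrt (∑ p : Fin m × Fin k, (A p.1 p.2) ^ 2) := by
    rw [frobNorm, Fintype.sum_prod_type]
  have h3 : frobNorm B = Real.sqrt (∑ p : Fin m × Fin k, (B p.1 p.2) ^ 2) := by
    rw [frobNorm, Fintype.sum_prod_type]
  rw [h1, h2, h3]
  have hcs := Finset.sum_mul_sq_le_sq_mul_sq Finset.univ
    (fun p : Fin m × Fin k => A p.1 p.2) (fun p : Fin m × Fin k => B p.1 p.2)
  calc ∑ p : Fin m × Fin k, A p.1 p.2 * B p.1 p.2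
      ≤ |∑ p : Fin m × Fin k, A p.1 p.2 * B p.1 p.2| := le_abs_self _
    _ = Real.sqrt ((∑ p : Fin m × Fin k, A p.1 p.2 * B p.1 p.2) ^ 2) := by
        rw [Real.sqrt_sq_eq_abs]
    _ ≤ Real.sqrt ((∑ p : Fin m × Fin k, (A p.1 p.2) ^ 2) *
          ∑ p : Fin m × Fin k, (B p.1 p.2) ^ 2) := Real.sqrt_le_sqrt hcs
    _ = _ := Real.sqrt_mul (Finset.sum_nonneg fun _ _ => sq_nonneg _) _

lemma projSet_apply (Ω : Set (Fin nn × Fin nn)) (S : Matrix (Fin nn) (Fin nn) ℝ)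
    (i j : Fin nn) : projSet Ω S i j = if (i, j) ∈ Ω then S i j else 0 := by
  simp [projSet, Set.indicator_apply]

lemma projSet_add (Ω : Set (Fin nn × Fin nn)) (A B : Matrix (Fin nn) (Fin nn) ℝ) :
    projSet Ω (A + B) = projSet Ω A + projSet Ω B := by
  ext i j
  simp only [Matrix.add_apply, projSet_apply]
  split <;> simp

lemma projSet_smul (Ω : Set (Fin nn × Fin nn)) (c : ℝ) (A : Matrix (Fin nn) (Fin nn) ℝ) :
    projSet Ω (c • A) = c • projSet Ω A := by
  ext i j
  simp only [Matrix.smul_apply, projSet_apply]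
  split <;> simp

lemma finner_projSet_right (Ω : Set (Fin nn × Fin nn)) (A B : Matrix (Fin nn) (Fin nn) ℝ) :
    finner A (projSet Ω B) = finner (projSet Ω A) B := by
  unfold finner
  refine Finset.sum_congr rfl fun i _ => Finset.sum_congr rfl fun j _ => ?_
  rw [projSet_apply, projSet_apply]
  split <;> simp

lemma projSet_idem (Ω : Set (Fin nn × Fin nn)) (A : Matrix (Fin nn) (Fin nn) ℝ) :
    projSet Ω (projSet Ω A) = projSet Ω A := by
  ext i j
  rw [projSet_apply, projSet_apply]
  split <;> simp_all [projSet_apply]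

end Aux

/-- subgradient inequality from the proof of Lemma 1.
Let Λ = UV* + W for a dual certificate W, let D satisfy λ P_Ω D = P_Ω(UV* − λ sgn(S₀) + W)
(so ‖P_Ω D‖_F ≤ 1/4), and let Z_L = UV* + W' (P_T W' = 0, ‖W'‖ ≤ 1) and
Z_S = λ(sgn(S₀) + F) (P_Ω F = 0, ‖F‖_∞ ≤ 1) be subgradients. Then for any H = (H_L, H_S)
with H_L + H_S = 0:
⟨Z_L, H_L⟩ + ⟨Z_S, H_S⟩ ≥ ⟨Z_L − Λ, P_{T⊥}H_L⟩ + ⟨Z_S − Λ, P_{Ω⊥}H_S⟩ − (λ/4)‖P_Ω H_S‖_F. -/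
theorem stmt13 {n r : ℕ} (L0 S0 : Matrix (Fin n) (Fin n) ℝ)
    (U V : Matrix (Fin n) (Fin r) ℝ) (σ : Fin r → ℝ)
    -- compact SVD of L₀
    (hU : Uᵀ * U = 1) (hV : Vᵀ * V = 1) (hσ : ∀ i, 0 < σ i)
    (hSVD : L0 = U * Matrix.diagonal σ * Vᵀ) (hrank : L0.rank = r)
    -- P_T is the orthogonal projection onto T
    (PT : Matrix (Fin n) (Fin n) ℝ →ₗ[ℝ] Matrix (Fin n) (Fin n) ℝ)
    (hPT : IsOrthProjOnto PT (Tspace U V))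
    (lam : ℝ) (hlam : 0 < lam)
    -- the dual certificate W, and Λ = UV* + W
    (W : Matrix (Fin n) (Fin n) ℝ)
    (hW1 : PT W = 0) (hW2 : specNorm W < 1 / 2)
    (hW3 : frobNorm (projSet (suppSet S0) (U * Vᵀ - lam • sgnMat S0 + W)) ≤ lam / 4)
    (hW4 : linfNorm ((U * Vᵀ + W) - projSet (suppSet S0) (U * Vᵀ + W)) < lam / 2)
    (Λ : Matrix (Fin n) (Fin n) ℝ) (hΛ : Λ = U * Vᵀ + W)
    -- D with λ P_Ω D = P_Ω(UV* − λ sgn(S₀) + W), so ‖P_Ω D‖_F ≤ 1/4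
    (D : Matrix (Fin n) (Fin n) ℝ)
    (hD : lam • projSet (suppSet S0) D =
      projSet (suppSet S0) (U * Vᵀ - lam • sgnMat S0 + W))
    (hD4 : frobNorm (projSet (suppSet S0) D) ≤ 1 / 4)
    -- the subgradients Z_L ∈ ∂‖L₀‖_* and Z_S ∈ ∂(λ‖S₀‖₁)
    (W' F ZL ZS : Matrix (Fin n) (Fin n) ℝ)
    (hW'1 : PT W' = 0) (hW'2 : specNorm W' ≤ 1) (hZL : ZL = U * Vᵀ + W')
    (hF1 : projSet (suppSet S0) F = 0) (hF2 : linfNorm F ≤ 1)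
    (hZS : ZS = lam • (sgnMat S0 + F))
    -- the pair H = (H_L, H_S) with H_L + H_S = 0
    (HL HS : Matrix (Fin n) (Fin n) ℝ) (hH : HL + HS = 0) :
    finner ZL HL + finner ZS HS ≥
      finner (ZL - Λ) (HL - PT HL) + finner (ZS - Λ) (HS - projSet (suppSet S0) HS)
        - (lam / 4) * frobNorm (projSet (suppSet S0) HS) := by
  classical
  have hPTA : PT (ZL - Λ) = 0 := by
    have h : ZL - Λ = W' - W := by rw [hZL, hΛ]; abel
    rw [h, map_sub, hW'1, hW1, sub_zero]
  have hApt : finner (ZL - Λ) (PT HL) = 0 := by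
    have h := hPT.2.2 (ZL - Λ) (PT HL) (hPT.1 HL)
    rwa [hPTA, sub_zero] at h
  have hΛ0 : finner Λ HL + finner Λ HS = 0 := by
    rw [← finner_add_right, hH, finner_zero_right]
  have eZL : finner ZL HL = finner Λ HL + finner (ZL - Λ) HL := by
    rw [← finner_add_left]; congr 1; abel
  have eZS : finner ZS HS = finner Λ HS + finner (ZS - Λ) HS := by
    rw [← finner_add_left]; congr 1; abel
  have eA : finner (ZL - Λ) (HL - PT HL)
      = finner (ZL - Λ) HL - finner (ZL - Λ) (PT HL) := finner_sub_right _ _ _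
  have eB : finner (ZS - Λ) (HS - projSet (suppSet S0) HS)
      = finner (ZS - Λ) HS - finner (ZS - Λ) (projSet (suppSet S0) HS) :=
    finner_sub_right _ _ _
  have harg : (ZS - Λ) + (U * Vᵀ - lam • sgnMat S0 + W) = lam • F := by
    rw [hZS, hΛ]; ext i j
    simp only [Matrix.add_apply, Matrix.sub_apply, Matrix.smul_apply, smul_eq_mul]
    ring
  have hkey : projSet (suppSet S0) (ZS - Λ) = -(lam • projSet (suppSet S0) D) := by
    have h1 : projSet (suppSet S0) (ZS - Λ) + lam • projSet (suppSet S0) D = 0 := by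
      rw [hD, ← projSet_add, harg, projSet_smul, hF1, smul_zero]
    exact eq_neg_of_add_eq_zero_left h1
  have hidem : finner (projSet (suppSet S0) D) (projSet (suppSet S0) HS)
      = finner (projSet (suppSet S0) D) HS := by
    rw [finner_projSet_right, projSet_idem]
  have eBΩ : finner (ZS - Λ) (projSet (suppSet S0) HS)
      = -(lam * finner (projSet (suppSet S0) D) (projSet (suppSet S0) HS)) := by
    rw [finner_projSet_right, hkey, finner_neg_left, finner_smul_left, hidem]
  have hCS : finner (projSet (suppSet S0) D) (projSet (suppSet S0) HS)
      ≤ (1 / 4) * frobNorm (projSet (suppSet S0) HS) := by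
    calc finner (projSet (suppSet S0) D) (projSet (suppSet S0) HS)
        ≤ frobNorm (projSet (suppSet S0) D) * frobNorm (projSet (suppSet S0) HS) :=
          finner_le_frob _ _
      _ ≤ (1 / 4) * frobNorm (projSet (suppSet S0) HS) :=
          mul_le_mul_of_nonneg_right hD4 (frobNorm_nonneg _)
  have hmul := mul_le_mul_of_nonneg_left hCS hlam.le
  linarith [eZL, eZS, hΛ0, eA, hApt, eB, eBΩ, hmul]
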